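/- Suppose a random variable T_p satisfies, for all x and m, the comparison T_p ≤ T₁ + Σ_{i=1}^{T₁} D_i where T₁ is a nonnegative integer random variable with P(T₁ ≥ m) ≤ α·exp(-m^β) for constants α, β > 0, and D₁, D₂, ... are i.i.d. geometric(p) variables (possibly dependent on T₁). Then there exist constants α' > 0 and c > 0 such that P(T_p ≥ 4m/p) ≤ α'·exp(-c·m^β') for some β' > 0 and all m ∈ N. -/

import Mathlib

open MeasureTheory ProbabilityTheory
open scoped ENNReal

/-- Per-factor integral: `E[r^D] = 2` where `r = 2/(2-p)` and `D` geometric(p). -/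
lemma aux_factor {Ω : Type*} [MeasurableSpace Ω] (μ : Measure Ω) [IsProbabilityMeasure μ]
    {p : ℝ} (hp0 : 0 < p) (hp1 : p ≤ 1) (D : Ω → ℕ) (hD : Measurable D)
    (hgeom : ∀ k : ℕ, μ {ω | D ω = k + 1} = ENNReal.ofReal ((1 - p) ^ k * p)) :
    ∫⁻ ω, ENNReal.ofReal (2 / (2 - p)) ^ D ω ∂μ = ENNReal.ofReal 2 := by
  set r : ℝ := 2 / (2 - p) with hr_def
  have h2p : 0 < 2 - p := by linarith
  have hr0 : 0 < r := by positivity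
  have hq0 : 0 ≤ 1 - p := by linarith
  have hq1 : 1 - p < 1 := by linarith
  -- each singleton preimage is measurable
  have hms : ∀ n : ℕ, MeasurableSet {ω | D ω = n} := fun n =>
    hD (measurableSet_singleton n)
  -- the geometric probabilities sum to 1
  have hgeosum : ∑' k : ℕ, ENNReal.ofReal ((1 - p) ^ k * p) = 1 := by
    rw [← ENNReal.ofReal_tsum_of_nonneg (fun k => by positivity)
      ((summable_geometric_of_lt_one hq0 hq1).mul_right p)]
    rw [tsum_mul_right, tsum_geometric_of_lt_one hq0 hq1]
    rw [show (1 : ℝ) - (1 - p) = p by ring]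
    rw [inv_mul_cancel₀ hp0.ne']
    simp
  -- P(D = 0) = 0
  have hzero : μ {ω | D ω = 0} = 0 := by
    have hdisj : Pairwise (Function.onFun Disjoint fun n => {ω | D ω = n}) := by
      intro a b hab
      simp only [Function.onFun, Set.disjoint_left]
      rintro ω (h1 : D ω = a) (h2 : D ω = b)
      exact hab (h1 ▸ h2 ▸ rfl)
    have huniv : (⋃ n, {ω | D ω = n}) = Set.univ := by
      ext ω; simp
    have htot : ∑' n : ℕ, μ {ω | D ω = n} = 1 := by
      rw [← measure_iUnion hdisj hms, huniv, measure_univ]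
    have hsplit : (∑' n : ℕ, μ {ω | D ω = n})
        = μ {ω | D ω = 0} + ∑' k : ℕ, μ {ω | D ω = k + 1} :=
      tsum_eq_zero_add' ENNReal.summable
    have htail1 : ∑' k : ℕ, μ {ω | D ω = k + 1} = 1 := by
      simpa only [hgeom] using hgeosum
    have h01 : μ {ω | D ω = 0} + 1 = 0 + 1 := by
      rw [← htail1, ← hsplit, htot, zero_add, htail1]
    exact (ENNReal.add_left_inj ENNReal.one_ne_top).mp h01
  -- compute the integral via the pushforward measure
  have hmap : ∫⁻ ω, ENNReal.ofReal r ^ D ω ∂μ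
      = ∑' n : ℕ, ENNReal.ofReal r ^ n * μ {ω | D ω = n} := by
    rw [← lintegral_map (f := fun n : ℕ => ENNReal.ofReal r ^ n) measurable_from_top hD,
      lintegral_countable']
    congr 1
    ext n
    rw [Measure.map_apply hD (measurableSet_singleton n)]
    rfl
  rw [hmap, tsum_eq_zero_add' ENNReal.summable, hzero]
  simp only [mul_zero, zero_add, hgeom]
  -- now a real computation
  have key : ∀ k : ℕ, ENNReal.ofReal r ^ (k + 1) * ENNReal.ofReal ((1 - p) ^ k * p)
      = ENNReal.ofReal (r * p * (r * (1 - p)) ^ k) := by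
    intro k
    rw [← ENNReal.ofReal_pow hr0.le, ← ENNReal.ofReal_mul (by positivity)]
    congr 1
    rw [mul_pow]
    ring
  simp only [key]
  have hrq0 : 0 ≤ r * (1 - p) := by positivity
  have hrq1 : r * (1 - p) < 1 := by
    rw [hr_def, div_mul_eq_mul_div, div_lt_one h2p]
    nlinarith
  rw [← ENNReal.ofReal_tsum_of_nonneg (fun k => by positivity)
    ((summable_geometric_of_lt_one hrq0 hrq1).mul_left _)]
  congr 1
  rw [tsum_mul_left, tsum_geometric_of_lt_one hrq0 hrq1]
  have h1 : 1 - r * (1 - p) = p / (2 - p) := by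
    rw [hr_def]; field_simp; ring
  rw [h1, hr_def]
  field_simp

/-- Chernoff-type tail bound for the sum of `m` i.i.d. geometric(p) variables. -/
lemma aux_sum {Ω : Type*} [MeasurableSpace Ω] (μ : Measure Ω) [IsProbabilityMeasure μ]
    {p : ℝ} (hp0 : 0 < p) (hp1 : p ≤ 1) (D : ℕ → Ω → ℕ) (hDmeas : ∀ i, Measurable (D i))
    (hindep : iIndepFun D μ)
    (hgeom : ∀ i, ∀ k : ℕ, μ {ω | D i ω = k + 1} = ENNReal.ofReal ((1 - p) ^ k * p))
    (m : ℕ) :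
    μ {ω | 3 * (m : ℝ) / p ≤ ((∑ i ∈ Finset.range m, D i ω : ℕ) : ℝ)}
      ≤ ENNReal.ofReal (2 ^ m * Real.exp (-(3 / 2) * m)) := by
  set r : ℝ := 2 / (2 - p) with hr_def
  have h2p : 0 < 2 - p := by linarith
  have hr0 : 0 < r := by positivity
  have hr1 : 1 ≤ r := by rw [hr_def, le_div_iff₀ h2p]; linarith
  set R : ℝ≥0∞ := ENNReal.ofReal r with hR_def
  have hR1 : 1 ≤ R := by
    rw [hR_def, ← ENNReal.ofReal_one]
    exact ENNReal.ofReal_le_ofReal hr1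
  have hRne0 : R ≠ 0 := by
    rw [hR_def]; simp [ENNReal.ofReal_eq_zero, not_le, hr0]
  have hRnetop : R ≠ ⊤ := ENNReal.ofReal_ne_top
  set g : ℕ → Ω → ℝ≥0∞ := fun i ω => R ^ D i ω with hg_def
  have hg_meas : ∀ i, Measurable (g i) := fun i =>
    (measurable_from_top (f := fun n : ℕ => R ^ n)).comp (hDmeas i)
  have hg_indep : iIndepFun g μ :=
    hindep.comp (fun _ n => R ^ n) (fun _ => measurable_from_top)
  -- product of integrals
  have hprod : ∀ n : ℕ, ∫⁻ ω, ∏ i ∈ Finset.range n, g i ω ∂μ = ENNReal.ofReal 2 ^ n := by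
    intro n
    induction n with
    | zero => simp
    | succ n ih =>
      have hmeasprod : Measurable (∏ i ∈ Finset.range n, g i) := by
        rw [Finset.prod_fn]
        exact Finset.measurable_prod _ fun i _ => hg_meas i
      have hmul := lintegral_mul_eq_lintegral_mul_lintegral_of_indepFun (μ := μ)
        hmeasprod (hg_meas n) (hg_indep.indepFun_prod_range_succ hg_meas n)
      have e1 : (fun ω => ∏ i ∈ Finset.range (n + 1), g i ω)
          = fun ω => ((∏ i ∈ Finset.range n, g i) * g n) ω := by
        funext ω
        simp [Finset.prod_apply, Finset.prod_range_succ]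
      rw [e1, hmul]
      have e2 : ∫⁻ ω, (∏ i ∈ Finset.range n, g i) ω ∂μ = ENNReal.ofReal 2 ^ n := by
        rw [← ih]; congr 1; funext ω; simp [Finset.prod_apply]
      rw [e2, aux_factor μ hp0 hp1 (D n) (hDmeas n) (hgeom n), pow_succ]
  -- Markov / Chernoff
  set N : ℕ := ⌈3 * (m : ℝ) / p⌉₊ with hN_def
  set f : Ω → ℝ≥0∞ := fun ω => R ^ (∑ i ∈ Finset.range m, D i ω) with hf_def
  have hf_meas : Measurable f :=
    (measurable_from_top (f := fun n : ℕ => R ^ n)).comp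
      (Finset.measurable_sum _ fun i _ => hDmeas i)
  have hf_int : ∫⁻ ω, f ω ∂μ = ENNReal.ofReal 2 ^ m := by
    rw [← hprod m]
    exact lintegral_congr fun ω => (Finset.prod_pow_eq_pow_sum _ _ _).symm
  have hsubset : {ω | 3 * (m : ℝ) / p ≤ ((∑ i ∈ Finset.range m, D i ω : ℕ) : ℝ)}
      ⊆ {ω | R ^ N ≤ f ω} := by
    intro ω hω
    have hN_le : N ≤ ∑ i ∈ Finset.range m, D i ω := Nat.ceil_le.mpr hω
    exact pow_le_pow_right₀ hR1 hN_le
  have hmarkov := mul_meas_ge_le_lintegral₀ (μ := μ) hf_meas.aemeasurable (R ^ N)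
  rw [hf_int] at hmarkov
  have hμle : μ {ω | 3 * (m : ℝ) / p ≤ ((∑ i ∈ Finset.range m, D i ω : ℕ) : ℝ)}
      ≤ ENNReal.ofReal 2 ^ m / R ^ N := by
    rw [ENNReal.le_div_iff_mul_le (Or.inl (pow_ne_zero _ hRne0))
      (Or.inl (ENNReal.pow_ne_top hRnetop))]
    calc μ _ * R ^ N ≤ μ {ω | R ^ N ≤ f ω} * R ^ N :=
          mul_le_mul_left (measure_mono hsubset) _
      _ = R ^ N * μ {ω | R ^ N ≤ f ω} := mul_comm _ _
      _ ≤ ENNReal.ofReal 2 ^ m := hmarkov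
  refine hμle.trans ?_
  -- r^N ≥ exp(3m/2)
  have hexp_le_r : Real.exp (p / 2) ≤ r := by
    have h1 : 1 - p / 2 ≤ Real.exp (-(p / 2)) := by
      have := Real.add_one_le_exp (-(p / 2))
      linarith
    have h2 : Real.exp (p / 2) * (1 - p / 2) ≤ 1 := by
      calc Real.exp (p / 2) * (1 - p / 2) ≤ Real.exp (p / 2) * Real.exp (-(p / 2)) :=
            mul_le_mul_of_nonneg_left h1 (Real.exp_pos _).le
        _ = 1 := by rw [← Real.exp_add]; simp
    have h3 : 0 < 1 - p / 2 := by linarith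
    have hr_eq : r = 1 / (1 - p / 2) := by
      rw [hr_def, div_eq_div_iff h2p.ne' h3.ne']; ring
    rw [hr_eq]
    exact (le_div_iff₀ h3).mpr (by linarith)
  have hNp : 3 * (m : ℝ) ≤ N * p := by
    have h := Nat.le_ceil (3 * (m : ℝ) / p)
    rw [div_le_iff₀ hp0] at h
    exact h
  have hrN : Real.exp (3 / 2 * m) ≤ r ^ N := by
    calc Real.exp (3 / 2 * m) ≤ Real.exp (N * (p / 2)) := by
          apply Real.exp_le_exp.mpr; nlinarith
      _ = Real.exp (p / 2) ^ N := Real.exp_nat_mul _ N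
      _ ≤ r ^ N := pow_le_pow_left₀ (Real.exp_pos _).le hexp_le_r N
  calc ENNReal.ofReal 2 ^ m / R ^ N
      = ENNReal.ofReal (2 ^ m) / ENNReal.ofReal (r ^ N) := by
        rw [hR_def, ← ENNReal.ofReal_pow (by norm_num : (0:ℝ) ≤ 2),
          ← ENNReal.ofReal_pow hr0.le]
    _ ≤ ENNReal.ofReal (2 ^ m) / ENNReal.ofReal (Real.exp (3 / 2 * m)) :=
        ENNReal.div_le_div le_rfl (ENNReal.ofReal_le_ofReal hrN)
    _ = ENNReal.ofReal (2 ^ m / Real.exp (3 / 2 * m)) :=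
        (ENNReal.ofReal_div_of_pos (Real.exp_pos _)).symm
    _ = ENNReal.ofReal (2 ^ m * Real.exp (-(3 / 2) * m)) := by
        rw [neg_mul, Real.exp_neg, div_eq_mul_inv]


/-- Coupling estimate: if `T_p ≤ T₁ + Σ_{i<T₁} D_i` where `T₁` has a stretched-exponential
tail and the `D_i` are i.i.d. geometric(`p`) delays, then `T_p` also has a
stretched-exponential tail: `P(T_p ≥ 4m/p) ≤ α'·exp(-c·m^{β'})` for all `m`. -/
theorem stmt_8 {Ω : Type*} [MeasurableSpace Ω] (μ : Measure Ω) [IsProbabilityMeasure μ]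
    (p : ℝ) (hp : p ∈ Set.Ioc (0 : ℝ) 1)
    (Tp T₁ : Ω → ℕ) (hTp : Measurable Tp) (hT₁ : Measurable T₁)
    (α β : ℝ) (hα : 0 < α) (hβ : 0 < β)
    (htail : ∀ m : ℕ, μ {ω | m ≤ T₁ ω} ≤ ENNReal.ofReal (α * Real.exp (-(m : ℝ) ^ β)))
    (D : ℕ → Ω → ℕ) (hDmeas : ∀ i, Measurable (D i))
    (hindep : iIndepFun D μ)
    (hgeom : ∀ i, ∀ k : ℕ, μ {ω | D i ω = k + 1} = ENNReal.ofReal ((1 - p) ^ k * p))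
    (hcompare : ∀ ω, (Tp ω : ℝ) ≤ (T₁ ω : ℝ) + ∑ i ∈ Finset.range (T₁ ω), (D i ω : ℝ)) :
    ∃ (α' c β' : ℝ), 0 < α' ∧ 0 < c ∧ 0 < β' ∧
      ∀ m : ℕ, μ {ω | 4 * (m : ℝ) / p ≤ (Tp ω : ℝ)} ≤
        ENNReal.ofReal (α' * Real.exp (-c * (m : ℝ) ^ β')) := by
  obtain ⟨hp0, hp1⟩ := hp
  have hβ' : 0 < min β 1 := lt_min hβ one_pos
  refine ⟨α + 1, 1 / 2, min β 1, by linarith, by norm_num, hβ', fun m => ?_⟩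
  by_cases hm : m = 0
  · subst hm
    refine le_trans prob_le_one ?_
    have h0 : ((0 : ℕ) : ℝ) ^ min β 1 = 0 := by
      rw [Nat.cast_zero, Real.zero_rpow hβ'.ne']
    rw [h0, mul_zero, Real.exp_zero, mul_one]
    exact ENNReal.one_le_ofReal.mpr (by linarith)
  · have hm1 : (1 : ℝ) ≤ m := by exact_mod_cast Nat.one_le_iff_ne_zero.mpr hm
    set A := {ω | (m : ℕ) ≤ T₁ ω} with hA_def
    set B := {ω | 3 * (m : ℝ) / p ≤ ((∑ i ∈ Finset.range m, D i ω : ℕ) : ℝ)} with hB_def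
    have hincl : {ω | 4 * (m : ℝ) / p ≤ (Tp ω : ℝ)} ⊆ A ∪ B := by
      intro ω hω
      by_cases hcase : m ≤ T₁ ω
      · exact Or.inl hcase
      · right
        push_neg at hcase
        have hT₁m : T₁ ω ≤ m := hcase.le
        have hsum : ∑ i ∈ Finset.range (T₁ ω), (D i ω : ℝ)
            ≤ ∑ i ∈ Finset.range m, (D i ω : ℝ) :=
          Finset.sum_le_sum_of_subset_of_nonneg (Finset.range_subset_range.mpr hT₁m)
            (fun i _ _ => by positivity)
        have h1 : (Tp ω : ℝ) ≤ (m : ℝ) + ∑ i ∈ Finset.range m, (D i ω : ℝ) :=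
          le_trans (hcompare ω) (add_le_add (by exact_mod_cast hT₁m) hsum)
        have hmp : (m : ℝ) ≤ (m : ℝ) / p := by
          rw [le_div_iff₀ hp0]
          nlinarith [Nat.cast_nonneg (α := ℝ) m]
        have hkey : 3 * (m : ℝ) / p ≤ ∑ i ∈ Finset.range m, (D i ω : ℝ) := by
          have h4 : 4 * (m : ℝ) / p ≤ (m : ℝ) + ∑ i ∈ Finset.range m, (D i ω : ℝ) :=
            le_trans hω h1
          have hsplit : 4 * (m : ℝ) / p - (m : ℝ) / p = 3 * (m : ℝ) / p := by ring
          linarith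
        show 3 * (m : ℝ) / p ≤ ((∑ i ∈ Finset.range m, D i ω : ℕ) : ℝ)
        rw [Nat.cast_sum]
        exact hkey
    have hsum_tail := aux_sum μ hp0 hp1 D hDmeas hindep hgeom m
    calc μ {ω | 4 * (m : ℝ) / p ≤ (Tp ω : ℝ)} ≤ μ (A ∪ B) := measure_mono hincl
      _ ≤ μ A + μ B := measure_union_le _ _
      _ ≤ ENNReal.ofReal (α * Real.exp (-(m : ℝ) ^ β))
          + ENNReal.ofReal (2 ^ m * Real.exp (-(3 / 2) * m)) :=
        add_le_add (htail m) hsum_tail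
      _ = ENNReal.ofReal (α * Real.exp (-(m : ℝ) ^ β)
          + 2 ^ m * Real.exp (-(3 / 2) * m)) :=
        (ENNReal.ofReal_add (by positivity) (by positivity)).symm
      _ ≤ ENNReal.ofReal ((α + 1) * Real.exp (-(1 / 2) * (m : ℝ) ^ min β 1)) := by
        apply ENNReal.ofReal_le_ofReal
        have hx0 : (0 : ℝ) ≤ (m : ℝ) ^ min β 1 := Real.rpow_nonneg (Nat.cast_nonneg m) _
        have hxβ : (m : ℝ) ^ min β 1 ≤ (m : ℝ) ^ β :=
          Real.rpow_le_rpow_of_exponent_le hm1 (min_le_left _ _)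
        have hx1 : (m : ℝ) ^ min β 1 ≤ (m : ℝ) := by
          have := Real.rpow_le_rpow_of_exponent_le hm1 (min_le_right β 1)
          rwa [Real.rpow_one] at this
        have hterm1 : α * Real.exp (-(m : ℝ) ^ β)
            ≤ α * Real.exp (-(1 / 2) * (m : ℝ) ^ min β 1) := by
          apply mul_le_mul_of_nonneg_left _ hα.le
          apply Real.exp_le_exp.mpr
          nlinarith
        have hterm2 : (2 : ℝ) ^ m * Real.exp (-(3 / 2) * m)
            ≤ Real.exp (-(1 / 2) * (m : ℝ) ^ min β 1) := by
          have h2m : (2 : ℝ) ^ m * Real.exp (-(3 / 2) * m)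
              = Real.exp ((m : ℝ) * Real.log 2 + -(3 / 2) * m) := by
            rw [Real.exp_add, Real.exp_nat_mul, Real.exp_log two_pos]
          rw [h2m]
          apply Real.exp_le_exp.mpr
          have hlog2 : Real.log 2 < 0.6931471808 := Real.log_two_lt_d9
          nlinarith
        nlinarith [Real.exp_pos (-(1 / 2) * (m : ℝ) ^ min β 1)]
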